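/- Define polynomials a_n(x) by a_0(x) = 1, a_1(x) = x, and a_n(x) = (n-1)·a_{n-1}(x) + x·a_{n-1}(x+1) for n ≥ 2. Then for all n ≥ 1, a_n(x) = Σ_{r=1}^n s(n,r) · x(x+1)···(x+r-1), where s(n,r) is the signless Stirling number of the first kind. -/

import Mathlib

/-- The signless Stirling numbers of the first kind. -/
def stirling1 : ℕ → ℕ → ℕ
  | 0, 0 => 1
  | 0, _ + 1 => 0
  | _ + 1, 0 => 0
  | n + 1, r + 1 => n * stirling1 n (r + 1) + stirling1 n r

/-- The polynomials `a_n(x)` defined by `a_0(x) = 1`, `a_1(x) = x` and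
`a_n(x) = (n-1)·a_{n-1}(x) + x·a_{n-1}(x+1)`. -/
def aPoly : ℕ → ℚ → ℚ
  | 0, _ => 1
  | 1, x => x
  | n + 2, x => (n + 1) * aPoly (n + 1) x + x * aPoly (n + 1) (x + 1)

lemma stirling1_eq_zero : ∀ n r, n < r → stirling1 n r = 0
  | 0, _ + 1, _ => rfl
  | n + 1, r + 1, h => by
    simp [stirling1, stirling1_eq_zero n (r + 1) (by omega),
      stirling1_eq_zero n r (by omega)]

lemma rf_succ (r : ℕ) (x : ℚ) :
    ∏ k ∈ Finset.range (r + 1), (x + k) = x * ∏ k ∈ Finset.range r, ((x + 1) + k) := by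
  rw [Finset.prod_range_succ']
  simp only [Nat.cast_zero, add_zero]
  rw [mul_comm]
  congr 1
  refine Finset.prod_congr rfl fun k _ => ?_
  push_cast; ring

lemma key (n : ℕ) (hn : 1 ≤ n) : ∀ x : ℚ, aPoly n x = ∑ r ∈ Finset.Icc 1 n,
      (stirling1 n r : ℚ) * ∏ k ∈ Finset.range r, (x + k) := by
  induction n, hn using Nat.le_induction with
  | base => intro x; simp [aPoly, stirling1]
  | succ n hn ih =>
    intro x
    obtain ⟨m, rfl⟩ : ∃ m, n = m + 1 := ⟨n - 1, by omega⟩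
    have hdef : aPoly (m + 2) x = ((m : ℚ) + 1) * aPoly (m + 1) x + x * aPoly (m + 1) (x + 1) := rfl
    rw [hdef, ih x, ih (x + 1)]
    simp only [← Finset.Ico_add_one_right_eq_Icc, Finset.sum_Ico_eq_sum_range]
    simp only [Nat.succ_sub_one, Nat.add_sub_cancel, show ∀ i : ℕ, 1 + i = i + 1 from fun i => Nat.add_comm 1 i]
    have hstep : ∀ i ∈ Finset.range (m + 2),
        (stirling1 (m + 2) (i + 1) : ℚ) * ∏ k ∈ Finset.range (i + 1), (x + k)
        = ((m : ℚ) + 1) * ((stirling1 (m + 1) (i + 1) : ℚ) * ∏ k ∈ Finset.range (i + 1), (x + k))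
          + (stirling1 (m + 1) i : ℚ) * ∏ k ∈ Finset.range (i + 1), (x + k) := by
      intro i _
      have : stirling1 (m + 2) (i + 1) = (m + 1) * stirling1 (m + 1) (i + 1) + stirling1 (m + 1) i := rfl
      rw [this]; push_cast; ring
    have hA : ∑ i ∈ Finset.range (m + 2),
        (stirling1 (m + 1) (i + 1) : ℚ) * ∏ k ∈ Finset.range (i + 1), (x + k)
        = ∑ i ∈ Finset.range (m + 1),
        (stirling1 (m + 1) (i + 1) : ℚ) * ∏ k ∈ Finset.range (i + 1), (x + k) := by
      rw [Finset.sum_range_succ, stirling1_eq_zero (m + 1) (m + 1 + 1) (by omega)]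
      simp
    have hB : ∑ i ∈ Finset.range (m + 2),
        (stirling1 (m + 1) i : ℚ) * ∏ k ∈ Finset.range (i + 1), (x + k)
        = x * ∑ i ∈ Finset.range (m + 1),
        (stirling1 (m + 1) (i + 1) : ℚ) * ∏ k ∈ Finset.range (i + 1), ((x + 1) + k) := by
      rw [Finset.sum_range_succ']
      have h0 : stirling1 (m + 1) 0 = 0 := rfl
      rw [h0]
      simp only [Nat.cast_zero, zero_mul, add_zero, Finset.mul_sum]
      refine Finset.sum_congr rfl fun i _ => ?_
      rw [rf_succ (i + 1) x]
      ring
    symm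
    rw [Finset.sum_congr rfl hstep, Finset.sum_add_distrib, ← Finset.mul_sum, hA, hB]

/-- `a_n(x) = Σ_{r=1}^n s(n,r) · x(x+1)⋯(x+r-1)` for `n ≥ 1`. -/
theorem aPoly_eq_sum_stirling1_risingFactorial (n : ℕ) (hn : 1 ≤ n) (x : ℚ) :
    aPoly n x = ∑ r ∈ Finset.Icc 1 n,
      (stirling1 n r : ℚ) * ∏ k ∈ Finset.range r, (x + k) := by
  exact key n hn x
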